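/- Let N ≥ 1 and n ≥ 1 be integers, let R > 0, and let z ∈ ℂ^N with ‖z‖ ≥ R. Then the supremum of |f(z)| over all polynomials f ∈ ℂ[z_1,…,z_N] of total degree at most n satisfying |f(w)| ≤ 1 for all w in the closed ball B(0,R) = {w ∈ ℂ^N : ‖w‖ ≤ R} equals (‖z‖/R)^n. -/

import Mathlib

open MvPolynomial

/-- Evaluation of the one-variable restriction polynomial along a line. -/
lemma eval_aeval_line {N : ℕ} (z : Fin N → ℂ) (f : MvPolynomial (Fin N) ℂ) (t : ℂ) :
    Polynomial.eval t (MvPolynomial.aeval (fun i => Polynomial.C (z i) * Polynomial.X) f)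
      = MvPolynomial.eval (fun i => z i * t) f := by
  induction f using MvPolynomial.induction_on with
  | C a => simp
  | add p q hp hq => simp [hp, hq]
  | mul_X p i hp => simp [hp]

/-- Degree bound for the one-variable restriction polynomial. -/
lemma natDegree_aeval_line {N : ℕ} (z : Fin N → ℂ) (f : MvPolynomial (Fin N) ℂ) :
    (MvPolynomial.aeval (fun i => Polynomial.C (z i) * Polynomial.X) f).natDegree
      ≤ f.totalDegree := by
  conv_lhs => rw [f.as_sum]
  rw [map_sum]
  apply Polynomial.natDegree_sum_le_of_forall_le
  intro d hd
  rw [MvPolynomial.aeval_monomial]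
  refine le_trans (Polynomial.natDegree_mul_le) ?_
  have h1 : (algebraMap ℂ (Polynomial ℂ) (MvPolynomial.coeff d f)).natDegree = 0 :=
    Polynomial.natDegree_C _
  rw [h1, zero_add]
  refine le_trans ?_ (MvPolynomial.le_totalDegree hd)
  rw [Finsupp.prod, Finsupp.sum]
  refine le_trans (Polynomial.natDegree_prod_le _ _) ?_
  apply Finset.sum_le_sum
  intro i _
  refine le_trans Polynomial.natDegree_pow_le ?_
  have : (Polynomial.C (z i) * Polynomial.X).natDegree ≤ 1 := by
    refine le_trans (Polynomial.natDegree_mul_le) ?_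
    simp [Polynomial.natDegree_C]
  calc d i * (Polynomial.C (z i) * Polynomial.X).natDegree ≤ d i * 1 := by
        exact Nat.mul_le_mul_left _ this
    _ = d i := by ring

/-- Schwarz-type bound for one-variable polynomials: if `P` has degree ≤ n and
`|P| ≤ 1` on the disk of radius `r ≤ 1`, then `|P(1)| ≤ (1/r)^n`. -/
lemma polySchwarz (n : ℕ) (P : Polynomial ℂ) (hP : P.natDegree ≤ n)
    (r : ℝ) (hr0 : 0 < r) (hr1 : r ≤ 1)
    (hb : ∀ s : ℂ, ‖s‖ ≤ r → ‖P.eval s‖ ≤ 1) :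
    ‖P.eval 1‖ ≤ (1 / r) ^ n := by
  set q : ℂ → ℂ := fun t => ∑ k ∈ Finset.range (n+1), P.coeff k * (r:ℂ)^k * t^(n-k) with hq
  have hPn : P.natDegree < n + 1 := Nat.lt_succ_of_le hP
  have hdiff : Differentiable ℂ q := by
    apply Differentiable.fun_sum
    intro k _
    exact (differentiable_pow _).const_mul _
  have key : ‖q (r:ℂ)‖ ≤ 1 := by
    apply Complex.norm_le_of_forall_mem_frontier_norm_le (U := Metric.ball (0:ℂ) 1)
      Metric.isBounded_ball hdiff.diffContOnCl
    · intro t ht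
      rw [frontier_ball (0:ℂ) one_ne_zero, Metric.mem_sphere, dist_zero_right] at ht
      have ht0 : t ≠ 0 := by
        intro h; rw [h] at ht; simp at ht
      have hqt : q t = t^n * P.eval ((r:ℂ)/t) := by
        rw [hq]
        simp only []
        rw [Polynomial.eval_eq_sum_range' hPn, Finset.mul_sum]
        apply Finset.sum_congr rfl
        intro k hk
        have hk' : k ≤ n := Nat.lt_succ_iff.mp (Finset.mem_range.mp hk)
        rw [div_pow, pow_sub₀ t ht0 hk']
        field_simp
      rw [hqt, norm_mul, norm_pow, ht, one_pow, one_mul]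
      apply hb
      rw [norm_div, Complex.norm_real, Real.norm_eq_abs, abs_of_pos hr0, ht, div_one]
    · rw [closure_ball (0:ℂ) one_ne_zero, Metric.mem_closedBall, dist_zero_right]
      simp only [Complex.norm_real, Real.norm_eq_abs, abs_of_pos hr0]
      exact hr1
  have hqr : q (r:ℂ) = (r:ℂ)^n * P.eval 1 := by
    rw [hq]
    simp only []
    rw [Polynomial.eval_eq_sum_range' hPn, Finset.mul_sum]
    apply Finset.sum_congr rfl
    intro k hk
    have hk' : k ≤ n := Nat.lt_succ_iff.mp (Finset.mem_range.mp hk)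
    rw [one_pow, mul_assoc, ← pow_add, Nat.add_sub_cancel' hk']
    ring
  rw [hqr, norm_mul, norm_pow] at key
  simp only [Complex.norm_real, Real.norm_eq_abs, abs_of_pos hr0] at key
  have hrn : 0 < r ^ n := pow_pos hr0 n
  rw [div_pow, one_pow, le_div_iff₀ hrn]
  linarith [key]

/-- Let `N ≥ 1`, `n ≥ 1`, `R > 0`, and let `z ∈ ℂ^N` with
`‖z‖ ≥ R`. The supremum of `|f(z)|` over all polynomials `f` in `N` complex
variables of total degree at most `n` satisfying `|f(w)| ≤ 1` on the closed
Euclidean ball `B(0,R) = {w : ‖w‖ ≤ R}` equals `(‖z‖/R)^n`. -/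
theorem extremal_sup_ball_eq (N n : ℕ) (hN : 1 ≤ N) (hn : 1 ≤ n)
    (R : ℝ) (hR : 0 < R) (z : EuclideanSpace ℂ (Fin N)) (hz : R ≤ ‖z‖) :
    (⨆ f : {f : MvPolynomial (Fin N) ℂ // f.totalDegree ≤ n ∧
        ∀ w : EuclideanSpace ℂ (Fin N), ‖w‖ ≤ R →
          ‖MvPolynomial.eval (fun i => w i) f‖ ≤ 1},
      ENNReal.ofReal ‖MvPolynomial.eval (fun i => z i) f.1‖) =
    ENNReal.ofReal ((‖z‖ / R) ^ n) := by
  have hz0 : 0 < ‖z‖ := lt_of_lt_of_le hR hz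
  set r : ℝ := R / ‖z‖ with hrdef
  have hr0 : 0 < r := div_pos hR hz0
  have hr1 : r ≤ 1 := (div_le_one hz0).mpr hz
  apply le_antisymm
  · -- upper bound
    apply iSup_le
    rintro ⟨f, hdeg, hbd⟩
    apply ENNReal.ofReal_le_ofReal
    set P := MvPolynomial.aeval (fun i => Polynomial.C (z i) * Polynomial.X) f with hP
    have h1 : P.natDegree ≤ n := le_trans (natDegree_aeval_line _ f) hdeg
    have h2 : ∀ s : ℂ, ‖s‖ ≤ r → ‖P.eval s‖ ≤ 1 := by
      intro s hs
      rw [hP, eval_aeval_line]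
      have hw : ‖s • z‖ ≤ R := by
        rw [norm_smul]
        calc ‖s‖ * ‖z‖ ≤ r * ‖z‖ := by
              apply mul_le_mul_of_nonneg_right _ (norm_nonneg z)
              exact hs
          _ = R := div_mul_cancel₀ R (ne_of_gt hz0)
      have := hbd (s • z) hw
      have hfun : (fun i => z i * s) = (fun i => (s • z) i) := by
        funext i
        simp [mul_comm]
      rw [hfun]
      exact this
    have h3 := polySchwarz n P h1 r hr0 hr1 h2
    rw [hP, eval_aeval_line] at h3
    simp only [mul_one] at h3
    rwa [hrdef, one_div_div] at h3
  · -- lower bound: exhibit the extremal polynomial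
    set a : Fin N → ℂ := fun i => starRingEnd ℂ (z i) / ((‖z‖ : ℂ) * (R : ℂ)) with ha
    set f₀ : MvPolynomial (Fin N) ℂ := (∑ i, MvPolynomial.C (a i) * MvPolynomial.X i) ^ n
      with hf₀
    have hev : ∀ w : EuclideanSpace ℂ (Fin N),
        MvPolynomial.eval (fun i => w i) f₀
          = ((inner ℂ z w : ℂ) / ((‖z‖ : ℂ) * (R : ℂ))) ^ n := by
      intro w
      rw [hf₀, map_pow, map_sum]
      congr 1
      rw [PiLp.inner_apply]
      simp only [RCLike.inner_apply]
      rw [Finset.sum_div]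
      apply Finset.sum_congr rfl
      intro i _
      rw [MvPolynomial.eval_mul, MvPolynomial.eval_C, MvPolynomial.eval_X, ha]
      ring
    have hdeg : f₀.totalDegree ≤ n := by
      rw [hf₀]
      refine le_trans (MvPolynomial.totalDegree_pow _ n) ?_
      have : (∑ i, MvPolynomial.C (a i) * MvPolynomial.X i :
          MvPolynomial (Fin N) ℂ).totalDegree ≤ 1 := by
        apply MvPolynomial.totalDegree_finsetSum_le
        intro i _
        refine le_trans (MvPolynomial.totalDegree_mul _ _) ?_
        simp [MvPolynomial.totalDegree_C, MvPolynomial.totalDegree_X]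
      calc n * (∑ i, MvPolynomial.C (a i) * MvPolynomial.X i :
            MvPolynomial (Fin N) ℂ).totalDegree ≤ n * 1 := Nat.mul_le_mul_left _ this
        _ = n := by ring
    have hbd : ∀ w : EuclideanSpace ℂ (Fin N), ‖w‖ ≤ R →
        ‖MvPolynomial.eval (fun i => w i) f₀‖ ≤ 1 := by
      intro w hw
      rw [hev w, norm_pow]
      apply pow_le_one₀ (by positivity)
      rw [norm_div]
      rw [div_le_one]
      · calc ‖(inner ℂ z w : ℂ)‖ = ‖(inner ℂ z w : ℂ)‖ := rfl
          _ ≤ ‖z‖ * ‖w‖ := norm_inner_le_norm (𝕜 := ℂ) z w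
          _ ≤ ‖z‖ * R := mul_le_mul_of_nonneg_left hw (norm_nonneg z)
          _ = ‖((‖z‖ : ℂ)) * (R : ℂ)‖ := by
              rw [norm_mul, Complex.norm_real, Complex.norm_real, Real.norm_eq_abs, Real.norm_eq_abs,
                abs_of_pos hz0, abs_of_pos hR]
      · rw [norm_mul, Complex.norm_real, Complex.norm_real, Real.norm_eq_abs, Real.norm_eq_abs,
          abs_of_pos hz0, abs_of_pos hR]
        positivity
    refine le_trans ?_ (le_iSup _ (⟨f₀, hdeg, hbd⟩ : {f : MvPolynomial (Fin N) ℂ //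
      f.totalDegree ≤ n ∧ ∀ w : EuclideanSpace ℂ (Fin N), ‖w‖ ≤ R →
        ‖MvPolynomial.eval (fun i => w i) f‖ ≤ 1}))
    apply le_of_eq
    congr 1
    rw [hev z]
    have hinner : (inner ℂ z z : ℂ) = ((‖z‖ : ℂ)) ^ 2 := inner_self_eq_norm_sq_to_K z
    rw [hinner, norm_pow, norm_div, norm_pow, norm_mul]
    rw [Complex.norm_real, Complex.norm_real, Real.norm_eq_abs, Real.norm_eq_abs, abs_of_pos hz0, abs_of_pos hR]
    rw [sq]
    rw [mul_div_mul_left _ _ (ne_of_gt hz0)]
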